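/- For all finite hypergraphs H1 and H2, the Cartesian product H1□H2 is connected if and only if both H1 and H2 are connected. -/

import Mathlib

/-!
Basic definitions: finite hypergraphs (a finite nonempty vertex set `V`, given by
`[Fintype V] [Nonempty V]`, together with a set of nonempty edges), walks, distance,
connectedness, simplicity, rank, colorings, Helly property, covers,
the various hypergraph products, 2-sections, and graph products.
-/

/-- A hypergraph on a vertex type `V`: a collection of nonempty edges (finite subsets of `V`). -/
structure FinHypergraph (V : Type*) where
  edges : Set (Finset V)
  nonempty_edges : ∀ e ∈ edges, e.Nonempty

namespace FinHypergraph

variable {V V₁ V₂ : Type*}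

/-- There is a walk of length `n` from `u` to `v`: a sequence of vertices `w 0, …, w n`
and edges `f 1, …, f n` with consecutive vertices distinct and both contained
in the corresponding edge. -/
def HasWalk (H : FinHypergraph V) (u v : V) (n : ℕ) : Prop :=
  ∃ (w : Fin (n + 1) → V) (f : Fin n → Finset V),
    w 0 = u ∧ w (Fin.last n) = v ∧
      ∀ i : Fin n, f i ∈ H.edges ∧ w i.castSucc ≠ w i.succ ∧
        w i.castSucc ∈ f i ∧ w i.succ ∈ f i

/-- The distance between two vertices: the minimum length of a walk joining them,
`⊤ = ∞` if there is none. -/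
noncomputable def dist (H : FinHypergraph V) (u v : V) : ℕ∞ :=
  sInf {x : ℕ∞ | ∃ n : ℕ, x = n ∧ H.HasWalk u v n}

/-- A hypergraph is connected if any two vertices are joined by a walk. -/
def Connected (H : FinHypergraph V) : Prop := ∀ u v : V, ∃ n, H.HasWalk u v n

/-- A hypergraph is simple if every edge has at least two vertices and
no edge is contained in another edge. -/
def Simple (H : FinHypergraph V) : Prop :=
  (∀ e ∈ H.edges, 2 ≤ e.card) ∧ ∀ e ∈ H.edges, ∀ f ∈ H.edges, e ⊆ f → e = f

/-- A hypergraph is loopless if every edge has at least two vertices. -/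
def Loopless (H : FinHypergraph V) : Prop := ∀ e ∈ H.edges, 2 ≤ e.card

/-- The rank: the maximum cardinality of an edge. -/
noncomputable def rank (H : FinHypergraph V) : ℕ := sSup (Finset.card '' H.edges)

/-- The anti-rank: the minimum cardinality of an edge. -/
noncomputable def antirank (H : FinHypergraph V) : ℕ := sInf (Finset.card '' H.edges)

/-- A proper coloring: no color class contains an edge. -/
def IsProperColoring (H : FinHypergraph V) {k : ℕ} (c : V → Fin k) : Prop :=
  ∀ e ∈ H.edges, ∀ i : Fin k, ¬ ∀ v ∈ e, c v = i

/-- A proper strong coloring: a proper coloring in which the vertices of every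
edge receive pairwise distinct colors. -/
def IsStrongColoring (H : FinHypergraph V) {k : ℕ} (c : V → Fin k) : Prop :=
  H.IsProperColoring c ∧ ∀ e ∈ H.edges, ∀ u ∈ e, ∀ v ∈ e, u ≠ v → c u ≠ c v

/-- The chromatic number: the least `k` admitting a proper `k`-coloring. -/
noncomputable def chromaticNumber (H : FinHypergraph V) : ℕ :=
  sInf {k : ℕ | ∃ c : V → Fin k, H.IsProperColoring c}

/-- The strong chromatic number: the least `k` admitting a proper strong `k`-coloring. -/
noncomputable def strongChromaticNumber (H : FinHypergraph V) : ℕ :=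
  sInf {k : ℕ | ∃ c : V → Fin k, H.IsStrongColoring c}

/-- The Helly property: every intersecting family of edges is a star. -/
def Helly (H : FinHypergraph V) : Prop :=
  ∀ E' ⊆ H.edges, (∀ e ∈ E', ∀ f ∈ E', ∃ x, x ∈ e ∧ x ∈ f) → ∃ v, ∀ e ∈ E', v ∈ e

/-- The covering number: the minimum cardinality of a set of vertices meeting every edge. -/
noncomputable def coverNumber (H : FinHypergraph V) : ℕ :=
  sInf {k : ℕ | ∃ T : Finset V, T.card = k ∧ ∀ e ∈ H.edges, ∃ v ∈ T, v ∈ e}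

/-- The Cartesian product of hypergraphs. -/
def cartProd (H₁ : FinHypergraph V₁) (H₂ : FinHypergraph V₂) : FinHypergraph (V₁ × V₂) where
  edges := {E | (∃ x, ∃ f ∈ H₂.edges, E = {x} ×ˢ f) ∨ ∃ e ∈ H₁.edges, ∃ y, E = e ×ˢ {y}}
  nonempty_edges := by
    rintro E (⟨x, f, hf, rfl⟩ | ⟨e, he, y, rfl⟩)
    · exact (Finset.singleton_nonempty x).product (H₂.nonempty_edges f hf)
    · exact (H₁.nonempty_edges e he).product (Finset.singleton_nonempty y)

section Products

variable [DecidableEq V₁] [DecidableEq V₂]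

/-- The minimal-rank-preserving direct product `H₁ ×̌ H₂`. -/
def minDirProd (H₁ : FinHypergraph V₁) (H₂ : FinHypergraph V₂) : FinHypergraph (V₁ × V₂) where
  edges := {E | ∃ e₁ ∈ H₁.edges, ∃ e₂ ∈ H₂.edges,
    E ⊆ e₁ ×ˢ e₂ ∧ E.card = min e₁.card e₂.card ∧
      (E.image Prod.fst).card = min e₁.card e₂.card ∧
      (E.image Prod.snd).card = min e₁.card e₂.card}
  nonempty_edges := by
    rintro E ⟨e₁, h₁, e₂, h₂, -, hc, -, -⟩
    rw [← Finset.card_pos, hc]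
    exact lt_min (Finset.card_pos.mpr (H₁.nonempty_edges e₁ h₁))
      (Finset.card_pos.mpr (H₂.nonempty_edges e₂ h₂))

/-- The maximal-rank-preserving direct product `H₁ ×̂ H₂`. -/
def maxDirProd (H₁ : FinHypergraph V₁) (H₂ : FinHypergraph V₂) : FinHypergraph (V₁ × V₂) where
  edges := {E | ∃ e₁ ∈ H₁.edges, ∃ e₂ ∈ H₂.edges,
    E ⊆ e₁ ×ˢ e₂ ∧ E.card = max e₁.card e₂.card ∧
      E.image Prod.fst = e₁ ∧ E.image Prod.snd = e₂}
  nonempty_edges := by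
    rintro E ⟨e₁, h₁, e₂, h₂, -, hc, -, -⟩
    rw [← Finset.card_pos, hc]
    exact lt_max_iff.mpr (Or.inl (Finset.card_pos.mpr (H₁.nonempty_edges e₁ h₁)))

/-- The non-rank-preserving direct product `H₁ ×̃ H₂`. -/
def nrDirProd (H₁ : FinHypergraph V₁) (H₂ : FinHypergraph V₂) : FinHypergraph (V₁ × V₂) where
  edges := {E | ∃ e ∈ H₁.edges, ∃ f ∈ H₂.edges, ∃ x ∈ e, ∃ y ∈ f,
    E = insert (x, y) ((e.erase x) ×ˢ (f.erase y))}
  nonempty_edges := by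
    rintro E ⟨e, -, f, -, x, -, y, -, rfl⟩
    exact Finset.insert_nonempty _ _

/-- The normal product `H₁ ⊠̌ H₂`: union of the Cartesian product edges and the
minimal-rank-preserving direct product edges. -/
def normalProd (H₁ : FinHypergraph V₁) (H₂ : FinHypergraph V₂) : FinHypergraph (V₁ × V₂) where
  edges := (H₁.cartProd H₂).edges ∪ (H₁.minDirProd H₂).edges
  nonempty_edges := by
    rintro E (h | h)
    · exact (H₁.cartProd H₂).nonempty_edges E h
    · exact (H₁.minDirProd H₂).nonempty_edges E h

/-- The strong product `H₁ ⊠̂ H₂`: union of the Cartesian product edges and the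
maximal-rank-preserving direct product edges. -/
def strongProd (H₁ : FinHypergraph V₁) (H₂ : FinHypergraph V₂) : FinHypergraph (V₁ × V₂) where
  edges := (H₁.cartProd H₂).edges ∪ (H₁.maxDirProd H₂).edges
  nonempty_edges := by
    rintro E (h | h)
    · exact (H₁.cartProd H₂).nonempty_edges E h
    · exact (H₁.maxDirProd H₂).nonempty_edges E h

/-- The lexicographic product `H₁ ∘ H₂`. -/
def lexProd (H₁ : FinHypergraph V₁) (H₂ : FinHypergraph V₂) : FinHypergraph (V₁ × V₂) where
  edges := {E | (E.image Prod.fst ∈ H₁.edges ∧ (E.image Prod.fst).card = E.card) ∨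
    ∃ x, ∃ e₂ ∈ H₂.edges, E = {x} ×ˢ e₂}
  nonempty_edges := by
    rintro E (⟨h₁, hc⟩ | ⟨x, e₂, h₂, rfl⟩)
    · rw [← Finset.card_pos, ← hc]
      exact Finset.card_pos.mpr (H₁.nonempty_edges _ h₁)
    · exact (Finset.singleton_nonempty x).product (H₂.nonempty_edges e₂ h₂)

end Products

/-- The square product `H₁ ■ H₂`. -/
def squareProd (H₁ : FinHypergraph V₁) (H₂ : FinHypergraph V₂) : FinHypergraph (V₁ × V₂) where
  edges := {E | ∃ e₁ ∈ H₁.edges, ∃ e₂ ∈ H₂.edges, E = e₁ ×ˢ e₂}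
  nonempty_edges := by
    rintro E ⟨e₁, h₁, e₂, h₂, rfl⟩
    exact (H₁.nonempty_edges e₁ h₁).product (H₂.nonempty_edges e₂ h₂)

/-- The 2-section of a hypergraph: distinct vertices are adjacent iff they lie
in a common edge. -/
def twoSection (H : FinHypergraph V) : SimpleGraph V where
  Adj x y := x ≠ y ∧ ∃ e ∈ H.edges, x ∈ e ∧ y ∈ e
  symm := Std.Symm.mk <| by rintro x y ⟨hxy, e, he, hx, hy⟩; exact ⟨hxy.symm, e, he, hy, hx⟩
  loopless := Std.Irrefl.mk <| by rintro x ⟨hx, -⟩; exact hx rfl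

end FinHypergraph

namespace SimpleGraph

variable {V₁ V₂ : Type*}

/-- The direct (tensor) product of simple graphs. -/
def directProd (G₁ : SimpleGraph V₁) (G₂ : SimpleGraph V₂) : SimpleGraph (V₁ × V₂) where
  Adj x y := G₁.Adj x.1 y.1 ∧ G₂.Adj x.2 y.2
  symm := ⟨fun _ _ ⟨h₁, h₂⟩ => ⟨h₁.symm, h₂.symm⟩⟩
  loopless := ⟨fun x h => G₁.loopless.irrefl x.1 h.1⟩

/-- The strong product of simple graphs. -/
def strongGraphProd (G₁ : SimpleGraph V₁) (G₂ : SimpleGraph V₂) : SimpleGraph (V₁ × V₂) where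
  Adj x y := x ≠ y ∧ ((x.1 = y.1 ∧ G₂.Adj x.2 y.2) ∨ (x.2 = y.2 ∧ G₁.Adj x.1 y.1) ∨
    (G₁.Adj x.1 y.1 ∧ G₂.Adj x.2 y.2))
  symm := Std.Symm.mk <| by
    rintro x y ⟨hne, (⟨h, h'⟩ | ⟨h, h'⟩ | ⟨h, h'⟩)⟩
    · exact ⟨hne.symm, Or.inl ⟨h.symm, h'.symm⟩⟩
    · exact ⟨hne.symm, Or.inr (Or.inl ⟨h.symm, h'.symm⟩)⟩
    · exact ⟨hne.symm, Or.inr (Or.inr ⟨h.symm, h'.symm⟩)⟩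
  loopless := Std.Irrefl.mk <| by rintro x ⟨hx, -⟩; exact hx rfl

/-- The lexicographic product of simple graphs. -/
def lexGraphProd (G₁ : SimpleGraph V₁) (G₂ : SimpleGraph V₂) : SimpleGraph (V₁ × V₂) where
  Adj x y := G₁.Adj x.1 y.1 ∨ (x.1 = y.1 ∧ G₂.Adj x.2 y.2)
  symm := Std.Symm.mk <| by
    rintro x y (h | ⟨h, h'⟩)
    · exact Or.inl h.symm
    · exact Or.inr ⟨h.symm, h'.symm⟩
  loopless := Std.Irrefl.mk <| by
    rintro x (h | ⟨-, h⟩)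
    · exact G₁.loopless.irrefl x.1 h
    · exact G₂.loopless.irrefl x.2 h

end SimpleGraph

namespace HypergraphAux

open FinHypergraph

variable {V V₁ V₂ : Type*}

/-- One step: two distinct vertices lying in a common edge. -/
abbrev Step (H : FinHypergraph V) (u v : V) : Prop :=
  u ≠ v ∧ ∃ e ∈ H.edges, u ∈ e ∧ v ∈ e

theorem hasWalk_iff_rtg (H : FinHypergraph V) (u v : V) :
    (∃ n, H.HasWalk u v n) ↔ Relation.ReflTransGen (Step H) u v := by
  constructor
  · rintro ⟨n, hw⟩
    induction n generalizing u with
    | zero =>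
      obtain ⟨w, f, h0, hl, -⟩ := hw
      have : u = v := by
        rw [← h0, ← hl]
        rfl
      exact this ▸ Relation.ReflTransGen.refl
    | succ n ih =>
      obtain ⟨w, f, h0, hl, hcond⟩ := hw
      have h₀ := hcond 0
      rw [Fin.castSucc_zero, h0] at h₀
      refine Relation.ReflTransGen.head
        (⟨h₀.2.1, f 0, h₀.1, h₀.2.2.1, h₀.2.2.2⟩ : Step H u (w (Fin.succ 0)))
        (ih (w (Fin.succ 0)) ?_)
      refine ⟨w ∘ Fin.succ, f ∘ Fin.succ, rfl, ?_, ?_⟩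
      · show w (Fin.last n).succ = v
        rw [Fin.succ_last, hl]
      · intro i
        have h := hcond i.succ
        refine ⟨h.1, ?_, ?_, ?_⟩
        · show w i.castSucc.succ ≠ w i.succ.succ
          rw [Fin.succ_castSucc]
          exact h.2.1
        · show w i.castSucc.succ ∈ f i.succ
          rw [Fin.succ_castSucc]
          exact h.2.2.1
        · exact h.2.2.2
  · intro h
    induction h with
    | refl => exact ⟨0, fun _ => u, fun i => i.elim0, rfl, rfl, fun i => i.elim0⟩
    | @tail b c _ hbc ih =>
      obtain ⟨n, w, f, h0, hl, hcond⟩ := ih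
      obtain ⟨hne, e, he, hb, hc⟩ := hbc
      refine ⟨n + 1, Fin.snoc w c, Fin.snoc f e, ?_, ?_, ?_⟩
      · rw [show (0 : Fin (n+2)) = (0 : Fin (n+1)).castSucc from Fin.castSucc_zero.symm,
          Fin.snoc_castSucc]
        exact h0
      · simp [Fin.snoc_last]
      · intro i
        induction i using Fin.lastCases with
        | last =>
          simp only [Fin.snoc_last, Fin.succ_last, Fin.snoc_castSucc, hl]
          exact ⟨he, hne, hb, hc⟩
        | cast j =>
          have hj := hcond j
          simp only [Fin.succ_castSucc, Fin.snoc_castSucc]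
          exact hj

theorem connected_iff_rtg (H : FinHypergraph V) :
    H.Connected ↔ ∀ u v : V, Relation.ReflTransGen (Step H) u v :=
  forall₂_congr fun u v => hasWalk_iff_rtg H u v

theorem step_cartProd {H₁ : FinHypergraph V₁} {H₂ : FinHypergraph V₂} {p q : V₁ × V₂}
    (h : Step (H₁.cartProd H₂) p q) :
    (Step H₁ p.1 q.1 ∧ p.2 = q.2) ∨ (p.1 = q.1 ∧ Step H₂ p.2 q.2) := by
  obtain ⟨hne, E, hE, hp, hq⟩ := h
  rcases hE with ⟨x, f, hf, rfl⟩ | ⟨e, he, y, rfl⟩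
  · rw [Finset.mem_product, Finset.mem_singleton] at hp hq
    right
    have h1 : p.1 = q.1 := hp.1.trans hq.1.symm
    exact ⟨h1, fun h2 => hne (Prod.ext h1 h2), f, hf, hp.2, hq.2⟩
  · rw [Finset.mem_product, Finset.mem_singleton] at hp hq
    left
    have h2 : p.2 = q.2 := hp.2.trans hq.2.symm
    exact ⟨⟨fun h1 => hne (Prod.ext h1 h2), e, he, hp.1, hq.1⟩, h2⟩

theorem rtg_fst {H₁ : FinHypergraph V₁} {H₂ : FinHypergraph V₂} {p q : V₁ × V₂}
    (h : Relation.ReflTransGen (Step (H₁.cartProd H₂)) p q) :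
    Relation.ReflTransGen (Step H₁) p.1 q.1 := by
  induction h with
  | refl => exact Relation.ReflTransGen.refl
  | tail _ hbc ih =>
    rcases step_cartProd hbc with ⟨h1, _⟩ | ⟨h1, _⟩
    · exact ih.tail h1
    · exact h1 ▸ ih

theorem rtg_snd {H₁ : FinHypergraph V₁} {H₂ : FinHypergraph V₂} {p q : V₁ × V₂}
    (h : Relation.ReflTransGen (Step (H₁.cartProd H₂)) p q) :
    Relation.ReflTransGen (Step H₂) p.2 q.2 := by
  induction h with
  | refl => exact Relation.ReflTransGen.refl
  | tail _ hbc ih =>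
    rcases step_cartProd hbc with ⟨_, h2⟩ | ⟨_, h2⟩
    · exact h2 ▸ ih
    · exact ih.tail h2

theorem rtg_lift_fst {H₁ : FinHypergraph V₁} (H₂ : FinHypergraph V₂) {u v : V₁} (y : V₂)
    (h : Relation.ReflTransGen (Step H₁) u v) :
    Relation.ReflTransGen (Step (H₁.cartProd H₂)) (u, y) (v, y) :=
  Relation.ReflTransGen.lift (r := Step H₁) (p := Step (H₁.cartProd H₂)) (fun a => (a, y))
    (fun a b hab => by
      obtain ⟨hne, e, he, ha, hb⟩ := hab
      exact ⟨fun h => hne (congrArg Prod.fst h), e ×ˢ {y},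
        Or.inr ⟨e, he, y, rfl⟩,
        Finset.mem_product.mpr ⟨ha, Finset.mem_singleton_self y⟩,
        Finset.mem_product.mpr ⟨hb, Finset.mem_singleton_self y⟩⟩) _ _ h

theorem rtg_lift_snd (H₁ : FinHypergraph V₁) {H₂ : FinHypergraph V₂} {u v : V₂} (x : V₁)
    (h : Relation.ReflTransGen (Step H₂) u v) :
    Relation.ReflTransGen (Step (H₁.cartProd H₂)) (x, u) (x, v) :=
  Relation.ReflTransGen.lift (r := Step H₂) (p := Step (H₁.cartProd H₂)) (fun a => (x, a))
    (fun a b hab => by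
      obtain ⟨hne, e, he, ha, hb⟩ := hab
      exact ⟨fun h => hne (congrArg Prod.snd h), {x} ×ˢ e,
        Or.inl ⟨x, e, he, rfl⟩,
        Finset.mem_product.mpr ⟨Finset.mem_singleton_self x, ha⟩,
        Finset.mem_product.mpr ⟨Finset.mem_singleton_self x, hb⟩⟩) _ _ h

end HypergraphAux

/-- the Cartesian product of hypergraphs is connected iff both factors are. -/
theorem connected_cartProd_iff {V₁ V₂ : Type*} [Fintype V₁] [Nonempty V₁]
    [Fintype V₂] [Nonempty V₂] (H₁ : FinHypergraph V₁) (H₂ : FinHypergraph V₂) :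
    (H₁.cartProd H₂).Connected ↔ H₁.Connected ∧ H₂.Connected := by
  rw [HypergraphAux.connected_iff_rtg, HypergraphAux.connected_iff_rtg,
    HypergraphAux.connected_iff_rtg]
  constructor
  · intro h
    refine ⟨fun u v => ?_, fun u v => ?_⟩
    · exact HypergraphAux.rtg_fst (h (u, Classical.arbitrary V₂) (v, Classical.arbitrary V₂))
    · exact HypergraphAux.rtg_snd (h (Classical.arbitrary V₁, u) (Classical.arbitrary V₁, v))
  · rintro ⟨h1, h2⟩ ⟨u1, u2⟩ ⟨v1, v2⟩
    exact (HypergraphAux.rtg_lift_fst H₂ u2 (h1 u1 v1)).trans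
      (HypergraphAux.rtg_lift_snd H₁ v1 (h2 u2 v2))
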